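/- Let Z be an integral domain, let k, n ≥ 1, and let P ∈ Z[t_1,…,t_k,y_1,…,y_n] be a nonzero polynomial. Let p be a prime element of Z that does not divide P (i.e., p does not divide all coefficients of P, so P is nonzero modulo p). If p is a fixed divisor of P with respect to t = (t_1,…,t_k), i.e., p divides P(m,y) in Z[y_1,…,y_n] for every m ∈ Z^k, then the quotient ring Z/pZ is finite of cardinality at most max_{1 ≤ i ≤ k} deg_{t_i}(P). -/

import Mathlib

open MvPolynomial

/-- Specialization of the first block of variables `t` at a point `m`, leaving the
variables `y` untouched. -/
noncomputable def specializeT {Z : Type*} [CommRing Z] {k n : ℕ} (m : Fin k → Z) :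
    MvPolynomial (Fin k ⊕ Fin n) Z →ₐ[Z] MvPolynomial (Fin n) Z :=
  aeval (Sum.elim (fun i => (C (m i) : MvPolynomial (Fin n) Z)) X)

/-- Degree transfer for `sumToIter`, monomial case. -/
lemma degreeOf_sumToIter_monomial_le {R : Type*} [CommRing R] [Nontrivial R]
    {σ τ : Type*} [DecidableEq σ] [DecidableEq τ]
    (i : σ) (m : (σ ⊕ τ) →₀ ℕ) (c : R) :
    degreeOf i (sumToIter R σ τ (monomial m c)) ≤ m (Sum.inl i) := by
  classical
  rw [monomial_eq, map_mul, Finsupp.prod, map_prod]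
  refine le_trans (degreeOf_mul_le _ _ _) ?_
  rw [sumToIter_C, degreeOf_C, zero_add]
  refine le_trans (degreeOf_prod_le _ _ _) ?_
  have hterm : ∀ s ∈ m.support,
      degreeOf i ((sumToIter R σ τ) (X s ^ m s)) ≤
        if s = Sum.inl i then m s else 0 := by
    intro s _
    rw [map_pow]
    refine le_trans (degreeOf_pow_le _ _ _) ?_
    rcases s with b | c'
    · rw [sumToIter_Xl, degreeOf_X]
      by_cases h : b = i
      · subst h; simp
      · simp [h, Ne.symm h]
    · rw [sumToIter_Xr, degreeOf_C]
      simp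
  refine le_trans (Finset.sum_le_sum hterm) ?_
  rw [Finset.sum_ite_eq' m.support (Sum.inl i) (fun s => m s)]
  split <;> simp

/-- Degree transfer for `sumToIter`. -/
lemma degreeOf_sumToIter_le {R : Type*} [CommRing R] [Nontrivial R]
    {σ τ : Type*} [DecidableEq σ] [DecidableEq τ]
    (i : σ) (f : MvPolynomial (σ ⊕ τ) R) :
    degreeOf i (sumToIter R σ τ f) ≤ degreeOf (Sum.inl i) f := by
  conv_lhs => rw [f.as_sum, map_sum]
  refine le_trans (degreeOf_sum_le _ _ _) ?_
  refine Finset.sup_le fun m hm => ?_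
  exact le_trans (degreeOf_sumToIter_monomial_le i m _) (monomial_le_degreeOf _ hm)

/-- A multivariate polynomial over a domain that vanishes on a grid `S^k` with all
degrees smaller than `#S` is zero. -/
lemma eval_zero_on_grid {A : Type*} [CommRing A] [IsDomain A] :
    ∀ (k : ℕ) (S : Finset A) (Q : MvPolynomial (Fin k) A),
      (∀ i, degreeOf i Q < S.card) →
      (∀ f : Fin k → A, (∀ i, f i ∈ S) → eval f Q = 0) → Q = 0 := by
  intro k
  induction k with
  | zero =>
      intro S Q hdeg heval
      have h0 : eval (fun i : Fin 0 => i.elim0) Q = 0 := heval _ (fun i => i.elim0)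
      rw [eq_C_of_isEmpty Q] at h0 ⊢
      rw [eval_C] at h0
      rw [h0, map_zero]
  | succ k ih =>
      intro S Q hdeg heval
      set Q' := MvPolynomial.finSuccEquiv A k Q with hQ'
      have hcoeff : ∀ j, Q'.coeff j = 0 := by
        intro j
        apply ih S
        · intro i
          exact lt_of_le_of_lt (degreeOf_coeff_finSuccEquiv Q i j) (hdeg i.succ)
        · intro f hf
          have hpoly : Polynomial.map (eval f) Q' = 0 := by
            apply Polynomial.eq_zero_of_natDegree_lt_card_of_eval_eq_zero' _ S
            · intro y hy
              rw [← eval_eq_eval_mv_eval']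
              apply heval
              intro i
              refine Fin.cases (by simpa using hy) (fun i' => by simpa using hf i') i
            · refine lt_of_le_of_lt Polynomial.natDegree_map_le ?_
              rw [hQ', natDegree_finSuccEquiv]
              exact hdeg 0
          have := coeff_eval_eq_eval_coeff (s' := f) (f := Q') (i := j)
          rw [hpoly] at this
          simpa using this.symm
      have hQ'0 : Q' = 0 := Polynomial.ext fun j => by simp [hcoeff j]
      have := (MvPolynomial.finSuccEquiv A k).injective (a₁ := Q) (a₂ := 0)
      simp only [map_zero] at this
      exact this hQ'0

theorem fixed_prime_divisor_small_residue
    (Z : Type*) [CommRing Z] [IsDomain Z]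
    (k n : ℕ) (hk : 1 ≤ k) (hn : 1 ≤ n)
    (P : MvPolynomial (Fin k ⊕ Fin n) Z) (hP : P ≠ 0)
    (p : Z) (hp : Prime p)
    (hnotdvd : ¬ (C p ∣ P))
    (hfix : ∀ m : Fin k → Z, C p ∣ specializeT m P) :
    Finite (Z ⧸ Ideal.span {p}) ∧
      Nat.card (Z ⧸ Ideal.span {p}) ≤
        Finset.univ.sup (fun i : Fin k => degreeOf (Sum.inl i) P) := by
  classical
  set I : Ideal Z := Ideal.span {p} with hI
  haveI hIprime : I.IsPrime := (Ideal.span_singleton_prime hp.ne_zero).mpr hp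
  set F := Z ⧸ I with hF
  set q : Z →+* F := Ideal.Quotient.mk I with hq
  set Qbar : MvPolynomial (Fin k ⊕ Fin n) F := MvPolynomial.map q P with hQbar
  set D : ℕ := Finset.univ.sup (fun i : Fin k => degreeOf (Sum.inl i) P) with hD
  -- `Qbar ≠ 0`
  have hQbar0 : Qbar ≠ 0 := by
    intro h
    apply hnotdvd
    rw [C_dvd_iff_dvd_coeff]
    intro d
    have : Qbar.coeff d = 0 := by rw [h, coeff_zero]
    rw [hQbar, coeff_map] at this
    exact (Ideal.Quotient.eq_zero_iff_dvd p _).mp this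
  -- specialization commutes with reduction mod p
  have hmapspec : ∀ m : Fin k → Z,
      MvPolynomial.map q (specializeT m P) =
        aeval (Sum.elim (fun i => (C (q (m i)) : MvPolynomial (Fin n) F)) X) Qbar := by
    intro m
    have hhom : (MvPolynomial.map q).comp ((specializeT m).toRingHom
          : MvPolynomial (Fin k ⊕ Fin n) Z →+* MvPolynomial (Fin n) Z) =
        ((aeval (Sum.elim (fun i => (C (q (m i)) : MvPolynomial (Fin n) F)) X)).toRingHom).comp
          (MvPolynomial.map q) := by
      apply MvPolynomial.ringHom_ext
      · intro a
        simp [specializeT]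
      · rintro (b | c) <;> simp [specializeT]
    exact congrArg (fun g => g P) hhom
  -- each specializeT m P reduces to 0 mod p
  have hzero : ∀ m : Fin k → Z, MvPolynomial.map q (specializeT m P) = 0 := by
    intro m
    obtain ⟨G, hG⟩ := hfix m
    ext d
    rw [coeff_map, coeff_zero]
    exact (Ideal.Quotient.eq_zero_iff_dvd p _).mpr
      ((C_dvd_iff_dvd_coeff p ((specializeT m P : MvPolynomial (Fin n) Z))).mp ⟨G, hG⟩ d)
  -- the vanishing on all of F^k
  have hvanish : ∀ m'' : Fin k → F,
      eval (fun i => (C (m'' i) : MvPolynomial (Fin n) F))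
        (sumToIter F (Fin k) (Fin n) Qbar) = 0 := by
    intro m''
    choose m hm using fun i => Ideal.Quotient.mk_surjective (I := I) (m'' i)
    have hcomm : (eval
          (fun i => (C (m'' i) : MvPolynomial (Fin n) F)) :
            MvPolynomial (Fin k) (MvPolynomial (Fin n) F) →+* MvPolynomial (Fin n) F).comp
          (sumToIter F (Fin k) (Fin n)) =
        (aeval (Sum.elim (fun i => (C (m'' i) : MvPolynomial (Fin n) F)) X)).toRingHom := by
      apply MvPolynomial.ringHom_ext
      · intro a
        simp [sumToIter_C]
      · rintro (b | c) <;> simp [sumToIter_Xl, sumToIter_Xr]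
    have h1 : eval (fun i => (C (m'' i) : MvPolynomial (Fin n) F))
        (sumToIter F (Fin k) (Fin n) Qbar) =
        aeval (Sum.elim (fun i => (C (m'' i) : MvPolynomial (Fin n) F)) X) Qbar :=
      congrArg (fun g => g Qbar) hcomm
    rw [h1]
    have h2 := hmapspec m
    simp only [hq, hm] at h2
    rw [← h2, hzero m]
  -- every finset of F has cardinality at most D
  have hS : ∀ S₀ : Finset F, S₀.card ≤ D := by
    intro S₀
    by_contra hcard
    push_neg at hcard
    set S : Finset (MvPolynomial (Fin n) F) := S₀.image C with hSdef
    have hScard : S.card = S₀.card := Finset.card_image_of_injective _ (C_injective _ _)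
    have hzero' : sumToIter F (Fin k) (Fin n) Qbar = 0 := by
      apply eval_zero_on_grid k S
      · intro i
        refine lt_of_le_of_lt (degreeOf_sumToIter_le i Qbar) ?_
        have h1 : degreeOf (Sum.inl i) Qbar ≤ degreeOf (Sum.inl i) P := by
          rw [degreeOf_eq_sup, degreeOf_eq_sup]
          exact Finset.sup_mono (MvPolynomial.support_map_subset _ _)
        have h2 : degreeOf (Sum.inl i) P ≤ D :=
          Finset.le_sup (f := fun i : Fin k => degreeOf (Sum.inl i) P) (Finset.mem_univ i)
        omega
      · intro f hf
        have : ∀ i, ∃ a ∈ S₀, C a = f i := by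
          intro i
          simpa [hSdef, eq_comm] using hf i
        choose g hg hgf using this
        have hfg : f = fun i => (C (g i) : MvPolynomial (Fin n) F) := by
          funext i; rw [hgf i]
        rw [hfg]
        exact hvanish g
    apply hQbar0
    have := (sumRingEquiv F (Fin k) (Fin n)).injective (a₁ := Qbar) (a₂ := 0)
    simp only [map_zero] at this
    exact this (by
      have e : (sumRingEquiv F (Fin k) (Fin n) : MvPolynomial (Fin k ⊕ Fin n) F →+* _) =
          sumToIter F (Fin k) (Fin n) := by
        apply MvPolynomial.ringHom_ext
        · intro a; simp [sumToIter_C]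
        · rintro (b | c) <;> simp [sumToIter_Xl, sumToIter_Xr, sumRingEquiv_X_inl, sumRingEquiv_X_inr]
      exact (congrArg (fun g => g Qbar) e).trans hzero')
  have hfin : Finite F := by
    by_contra h
    rw [not_finite_iff_infinite] at h
    obtain ⟨S₀, hS₀⟩ := Infinite.exists_subset_card_eq F (D + 1)
    have := hS S₀
    omega
  refine ⟨hfin, ?_⟩
  haveI := Fintype.ofFinite F
  have hcard : Nat.card F ≤ D := by
    have h := hS (Finset.univ : Finset F)
    rwa [Finset.card_univ, ← Nat.card_eq_fintype_card] at h
  exact hcard
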